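/- Under the boundary triplet Π₋ = {𝓗₀ ⊕ 𝓗₁, Γ₀, Γ₁} for A* as above, the relation A₀ := ker Γ₀ = {f̂ ∈ A* : Γ₀ f̂ = 0} is a closed symmetric extension of A, and every λ in the open lower half-plane ℂ₋ belongs to the resolvent set of A₀. -/

import Mathlib

/- STATEMENT 7: `A₀ := ker Γ₀` is a closed symmetric extension of `A`, and every
`λ ∈ ℂ₋` belongs to the resolvent set of `A₀` (i.e. `(A₀ − λ)⁻¹` is an
everywhere-defined bounded operator). -/

open scoped ComplexInnerProductSpace

set_option synthInstance.maxHeartbeats 1000000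
set_option maxHeartbeats 4000000

/-- The adjoint of a linear relation `T` in `𝔥`. -/
def adjRel {𝔥 : Type*} [NormedAddCommGroup 𝔥] [InnerProductSpace ℂ 𝔥]
    (T : Submodule ℂ (𝔥 × 𝔥)) : Submodule ℂ (𝔥 × 𝔥) where
  carrier := {p | ∀ q ∈ T, ⟪p.2, q.1⟫ = ⟪p.1, q.2⟫}
  add_mem' := by
    intro a b ha hb q hq
    show ⟪a.2 + b.2, q.1⟫ = ⟪a.1 + b.1, q.2⟫
    rw [inner_add_left, inner_add_left, ha q hq, hb q hq]
  zero_mem' := by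
    intro q hq
    show ⟪(0 : 𝔥), q.1⟫ = ⟪(0 : 𝔥), q.2⟫
    simp
  smul_mem' := by
    intro c a ha q hq
    show ⟪c • a.2, q.1⟫ = ⟪c • a.1, q.2⟫
    rw [inner_smul_left, inner_smul_left, ha q hq]

lemma mem_adjRel {𝔥 : Type*} [NormedAddCommGroup 𝔥] [InnerProductSpace ℂ 𝔥]
    {T : Submodule ℂ (𝔥 × 𝔥)} {p : 𝔥 × 𝔥} :
    p ∈ adjRel T ↔ ∀ q ∈ T, ⟪p.2, q.1⟫ = ⟪p.1, q.2⟫ := Iff.rfl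

lemma adjRel_isClosed {𝔥 : Type*} [NormedAddCommGroup 𝔥] [InnerProductSpace ℂ 𝔥]
    (T : Submodule ℂ (𝔥 × 𝔥)) : IsClosed ((adjRel T : Submodule ℂ (𝔥 × 𝔥)) : Set (𝔥 × 𝔥)) := by
  have : ((adjRel T : Submodule ℂ (𝔥 × 𝔥)) : Set (𝔥 × 𝔥)) =
      ⋂ q ∈ T, {p : 𝔥 × 𝔥 | ⟪p.2, q.1⟫ = ⟪p.1, q.2⟫} := by
    ext p
    simp only [Set.mem_iInter, Set.mem_setOf_eq, SetLike.mem_coe, mem_adjRel]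
  rw [this]
  exact isClosed_biInter fun q hq => isClosed_eq
    (Continuous.inner continuous_snd continuous_const)
    (Continuous.inner continuous_fst continuous_const)

lemma adjRel_antitone {𝔥 : Type*} [NormedAddCommGroup 𝔥] [InnerProductSpace ℂ 𝔥]
    {T U : Submodule ℂ (𝔥 × 𝔥)} (h : T ≤ U) : adjRel U ≤ adjRel T :=
  fun _ hp q hq => hp q (h hq)

variable {𝔥 𝓗₀ : Type*} [NormedAddCommGroup 𝔥] [InnerProductSpace ℂ 𝔥] [CompleteSpace 𝔥]
  [NormedAddCommGroup 𝓗₀] [InnerProductSpace ℂ 𝓗₀] [CompleteSpace 𝓗₀]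

theorem statement7
    (A : Submodule ℂ (𝔥 × 𝔥)) (hA : IsClosed (A : Set (𝔥 × 𝔥))) (hsym : A ≤ adjRel A)
    (𝓗₁ : Submodule ℂ 𝓗₀) (hcl : IsClosed (𝓗₁ : Set 𝓗₀))
    (Γ₀ : ↥(adjRel A) →ₗ[ℂ] 𝓗₀) (Γ₁ : ↥(adjRel A) →ₗ[ℂ] ↥𝓗₁)
    (hsurj : Function.Surjective (fun f : ↥(adjRel A) => (Γ₀ f, Γ₁ f)))
    (hGreen : ∀ f g : ↥(adjRel A),
      ⟪(g : 𝔥 × 𝔥).1, (f : 𝔥 × 𝔥).2⟫ - ⟪(g : 𝔥 × 𝔥).2, (f : 𝔥 × 𝔥).1⟫ =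
        ⟪Γ₀ g, (Γ₁ f : 𝓗₀)⟫ - ⟪(Γ₁ g : 𝓗₀), Γ₀ f⟫ -
          Complex.I * ⟪((Submodule.orthogonalProjection (𝓗₁ᗮ) (Γ₀ g) : ↥(𝓗₁ᗮ)) : 𝓗₀),
            ((Submodule.orthogonalProjection (𝓗₁ᗮ) (Γ₀ f) : ↥(𝓗₁ᗮ)) : 𝓗₀)⟫)
    (A₀ : Submodule ℂ (𝔥 × 𝔥)) (hA₀ : A₀ = Submodule.map (adjRel A).subtype (LinearMap.ker Γ₀)) :
    -- A₀ is a closed symmetric extension of A ...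
    A ≤ A₀ ∧ A₀ ≤ adjRel A₀ ∧ IsClosed (A₀ : Set (𝔥 × 𝔥)) ∧
    -- ... and ℂ₋ ⊆ ρ(A₀)
    (∀ l : ℂ, l.im < 0 → ∃ R : 𝔥 →L[ℂ] 𝔥,
      (∀ h : 𝔥, (R h, h + l • R h) ∈ A₀) ∧ (∀ p ∈ A₀, R (p.2 - l • p.1) = p.1)) := by
  subst hA₀
  haveI h𝓗₁c : CompleteSpace 𝓗₁ := hcl.completeSpace_coe
  -- abbreviations
  have hsurj' : ∀ (x : 𝓗₀) (y : ↥𝓗₁), ∃ g : ↥(adjRel A), Γ₀ g = x ∧ Γ₁ g = y := by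
    intro x y
    obtain ⟨g, hg⟩ := hsurj (x, y)
    exact ⟨g, congrArg Prod.fst hg, congrArg Prod.snd hg⟩
  have hP2zero : ∀ y : ↥𝓗₁, Submodule.orthogonalProjection (𝓗₁ᗮ) (y : 𝓗₀) = 0 := fun y =>
    Submodule.orthogonalProjectionOnto_apply_of_mem_orthogonal
      (Submodule.le_orthogonal_orthogonal 𝓗₁ y.2)
  have hP2self : ∀ x : ↥(𝓗₁ᗮ), Submodule.orthogonalProjection (𝓗₁ᗮ) (x : 𝓗₀) = x :=
    Submodule.orthogonalProjectionOnto_mem_subspace_eq_self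
  -- membership characterization
  have hmem : ∀ {p : 𝔥 × 𝔥}, p ∈ Submodule.map (adjRel A).subtype (LinearMap.ker Γ₀) ↔
      ∃ f : ↥(adjRel A), Γ₀ f = 0 ∧ (f : 𝔥 × 𝔥) = p := by
    intro p
    constructor
    · rintro ⟨f, hf, rfl⟩
      exact ⟨f, hf, rfl⟩
    · rintro ⟨f, h0, rfl⟩
      exact ⟨f, h0, rfl⟩
  -- key lemma : vanishing of Γ₀
  have keyA : ∀ f : ↥(adjRel A),
      (∀ g : ↥(adjRel A), (((Γ₀ g : 𝓗₀) ∈ 𝓗₁ᗮ ∧ Γ₁ g = 0) ∨ Γ₀ g = 0) →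
        ⟪(g : 𝔥 × 𝔥).1, (f : 𝔥 × 𝔥).2⟫ - ⟪(g : 𝔥 × 𝔥).2, (f : 𝔥 × 𝔥).1⟫ = 0) →
      Γ₀ f = 0 := by
    intro f hf
    have h1 : ∀ y : ↥𝓗₁, ⟪(y : 𝓗₀), Γ₀ f⟫ = 0 := by
      intro y
      obtain ⟨g, hg0, hg1⟩ := hsurj' 0 y
      have h := (hGreen f g).symm.trans (hf g (Or.inr hg0))
      rw [hg0, hg1] at h
      simpa using h
    have h2 : Submodule.orthogonalProjection (𝓗₁ᗮ) (Γ₀ f) = 0 := by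
      set x : ↥(𝓗₁ᗮ) := Submodule.orthogonalProjection (𝓗₁ᗮ) (Γ₀ f) with hx
      obtain ⟨g, hg0, hg1⟩ := hsurj' (x : 𝓗₀) 0
      have hmemx : (Γ₀ g : 𝓗₀) ∈ 𝓗₁ᗮ := by rw [hg0]; exact x.2
      have h := (hGreen f g).symm.trans (hf g (Or.inl ⟨hmemx, hg1⟩))
      rw [hg0, hg1, hP2self x] at h
      have hx1 : ⟪(x : 𝓗₀), ((Γ₁ f : 𝓗₀))⟫ = 0 :=
        (Submodule.mem_orthogonal' _ _).mp x.2 _ (Γ₁ f).2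
      rw [hx1] at h
      simp only [Submodule.coe_zero, inner_zero_left, sub_zero, zero_sub, neg_eq_zero,
        mul_eq_zero, Complex.I_ne_zero, false_or, inner_self_eq_zero] at h
      rw [← hx] at h
      exact_mod_cast inner_self_eq_zero.mp h
    have hmem1 : (Γ₀ f : 𝓗₀) ∈ 𝓗₁ᗮ := (Submodule.mem_orthogonal _ _).mpr fun u hu => h1 ⟨u, hu⟩
    have hmem2 : (Γ₀ f : 𝓗₀) ∈ (𝓗₁ᗮ)ᗮ := Submodule.orthogonalProjectionOnto_eq_zero_iff.mp h2
    have : ⟪Γ₀ f, Γ₀ f⟫ = 0 := (Submodule.mem_orthogonal _ _).mp hmem2 _ hmem1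
    exact inner_self_eq_zero.mp this
  -- Part 1 : A ≤ A₀
  have part1 : A ≤ Submodule.map (adjRel A).subtype (LinearMap.ker Γ₀) := by
    intro a ha
    set f : ↥(adjRel A) := ⟨a, hsym ha⟩ with hfdef
    have h0 : Γ₀ f = 0 := by
      apply keyA f
      intro g _
      have hg := g.2 a ha
      show ⟪(g : 𝔥 × 𝔥).1, a.2⟫ - ⟪(g : 𝔥 × 𝔥).2, a.1⟫ = 0
      rw [sub_eq_zero]
      exact hg.symm
    exact hmem.mpr ⟨f, h0, rfl⟩
  -- Part 2 : symmetry
  have part2 : Submodule.map (adjRel A).subtype (LinearMap.ker Γ₀) ≤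
      adjRel (Submodule.map (adjRel A).subtype (LinearMap.ker Γ₀)) := by
    intro p hp
    obtain ⟨f, hf0, rfl⟩ := hmem.mp hp
    rw [mem_adjRel]
    intro q hq
    obtain ⟨g, hg0, rfl⟩ := hmem.mp hq
    have h := hGreen g f
    rw [hf0, hg0] at h
    simp only [map_zero, Submodule.coe_zero, inner_zero_left, inner_zero_right, sub_zero,
      zero_sub, mul_zero, neg_zero] at h
    exact (sub_eq_zero.mp h).symm
  -- real inner products on A₀
  have hreal : ∀ p ∈ Submodule.map (adjRel A).subtype (LinearMap.ker Γ₀),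
      ⟪p.2, p.1⟫ = ⟪p.1, p.2⟫ := fun p hp => (part2 hp) p hp
  -- the basic estimate
  have hest : ∀ l : ℂ, l.im < 0 → ∀ p ∈ Submodule.map (adjRel A).subtype (LinearMap.ker Γ₀),
      (-l.im) * ‖p.1‖ ≤ ‖p.2 - l • p.1‖ := by
    intro l hl p hp
    have him : (⟪p.1, p.2⟫ : ℂ).im = 0 := by
      have hc : (starRingEnd ℂ) ⟪p.1, p.2⟫ = ⟪p.1, p.2⟫ := by
        rw [inner_conj_symm]; exact hreal p hp
      exact Complex.conj_eq_iff_im.mp hc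
    have hinner : ⟪p.1, p.2 - l • p.1⟫ = ⟪p.1, p.2⟫ - l * ((‖p.1‖ : ℂ)) ^ 2 := by
      rw [inner_sub_right, inner_smul_right, inner_self_eq_norm_sq_to_K]
      norm_cast
    have him2 : (⟪p.1, p.2 - l • p.1⟫ : ℂ).im = -(l.im * ‖p.1‖ ^ 2) := by
      rw [hinner]
      simp [Complex.sub_im, Complex.mul_im, him, ← Complex.ofReal_pow]
    have hb : (-l.im) * ‖p.1‖ ^ 2 ≤ ‖p.1‖ * ‖p.2 - l • p.1‖ := by
      have h1 : |(⟪p.1, p.2 - l • p.1⟫ : ℂ).im| ≤ ‖p.1‖ * ‖p.2 - l • p.1‖ := by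
        refine le_trans (Complex.abs_im_le_norm _) ?_
        exact norm_inner_le_norm _ _
      calc (-l.im) * ‖p.1‖ ^ 2 = -(l.im * ‖p.1‖ ^ 2) := by ring
        _ ≤ |(-(l.im * ‖p.1‖ ^ 2))| := le_abs_self _
        _ = |(⟪p.1, p.2 - l • p.1⟫ : ℂ).im| := by rw [him2]
        _ ≤ ‖p.1‖ * ‖p.2 - l • p.1‖ := h1
    rcases eq_or_lt_of_le (norm_nonneg p.1) with h0 | h0
    · rw [← h0, mul_zero]
      exact norm_nonneg _
    · nlinarith [hb, h0, norm_nonneg (p.2 - l • p.1)]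
  -- Part 3 : closedness
  have part3 : IsClosed ((Submodule.map (adjRel A).subtype (LinearMap.ker Γ₀) :
      Submodule ℂ (𝔥 × 𝔥)) : Set (𝔥 × 𝔥)) := by
    rw [← closure_eq_iff_isClosed]
    refine subset_antisymm ?_ subset_closure
    intro p hp
    have hsubS : ((Submodule.map (adjRel A).subtype (LinearMap.ker Γ₀) :
        Submodule ℂ (𝔥 × 𝔥)) : Set (𝔥 × 𝔥)) ⊆ (adjRel A : Set (𝔥 × 𝔥)) := by
      intro q hq
      obtain ⟨f, _, rfl⟩ := hmem.mp hq
      exact f.2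
    have hpS : p ∈ adjRel A := closure_minimal hsubS (adjRel_isClosed A) hp
    refine hmem.mpr ⟨⟨p, hpS⟩, ?_, rfl⟩
    apply keyA
    intro g hg
    have hzero : ((Submodule.map (adjRel A).subtype (LinearMap.ker Γ₀) :
        Submodule ℂ (𝔥 × 𝔥)) : Set (𝔥 × 𝔥)) ⊆
        {q : 𝔥 × 𝔥 | ⟪(g : 𝔥 × 𝔥).1, q.2⟫ - ⟪(g : 𝔥 × 𝔥).2, q.1⟫ = 0} := by
      intro q hq
      obtain ⟨fq, h0, rfl⟩ := hmem.mp hq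
      have h := hGreen fq g
      rw [h0] at h
      simp only [map_zero, Submodule.coe_zero, inner_zero_right, mul_zero, sub_zero] at h
      show ⟪(g : 𝔥 × 𝔥).1, ((fq : 𝔥 × 𝔥)).2⟫ - ⟪(g : 𝔥 × 𝔥).2, ((fq : 𝔥 × 𝔥)).1⟫ = 0
      rw [h]
      rcases hg with ⟨hperp, _⟩ | hg0
      · exact (Submodule.mem_orthogonal' _ _).mp hperp _ (Γ₁ fq).2
      · rw [hg0]
        exact inner_zero_left _
    have hcont : Continuous fun q : 𝔥 × 𝔥 => ⟪(g : 𝔥 × 𝔥).1, q.2⟫ - ⟪(g : 𝔥 × 𝔥).2, q.1⟫ :=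
      ((continuous_const.inner continuous_snd).sub (continuous_const.inner continuous_fst))
    exact closure_minimal hzero (isClosed_eq hcont continuous_const) hp
  refine ⟨part1, part2, part3, ?_⟩
  intro l hl
  have hlpos : 0 < -l.im := by linarith
  set A₀' := Submodule.map (adjRel A).subtype (LinearMap.ker Γ₀) with hA₀'
  set T : (𝔥 × 𝔥) →ₗ[ℂ] 𝔥 := LinearMap.snd ℂ 𝔥 𝔥 - l • LinearMap.fst ℂ 𝔥 𝔥 with hT
  have hTapp : ∀ p : 𝔥 × 𝔥, T p = p.2 - l • p.1 := fun p => rfl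
  set M := Submodule.map T A₀' with hM
  -- M is closed
  have hMclosed : IsClosed (M : Set 𝔥) := by
    apply IsSeqClosed.isClosed
    intro xs x hxs hx
    choose p hpA hTp using fun n => Submodule.mem_map.mp (hxs n)
    have hC : CauchySeq fun n => (p n).1 := by
      rw [Metric.cauchySeq_iff]
      intro ε hε
      obtain ⟨N, hN⟩ := Metric.cauchySeq_iff.mp hx.cauchySeq ((-l.im) * ε) (mul_pos hlpos hε)
      refine ⟨N, fun m hm n hn => ?_⟩
      have hd : p m - p n ∈ A₀' := Submodule.sub_mem _ (hpA m) (hpA n)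
      have he := hest l hl _ hd
      have heq : (p m - p n).2 - l • (p m - p n).1 = xs m - xs n := by
        rw [← hTp m, ← hTp n, hTapp, hTapp]
        simp only [Prod.snd_sub, Prod.fst_sub, smul_sub]
        abel
      rw [heq] at he
      have hxd := hN m hm n hn
      rw [dist_eq_norm] at hxd ⊢
      have : (p m - p n).1 = (p m).1 - (p n).1 := rfl
      rw [this] at he
      nlinarith [he, hxd, hlpos]
    obtain ⟨a, ha⟩ := cauchySeq_tendsto_of_complete hC
    have hp2 : Filter.Tendsto (fun n => (p n).2) Filter.atTop (nhds (x + l • a)) := by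
      have heq : ∀ n, (p n).2 = xs n + l • (p n).1 := by
        intro n
        have := hTp n
        rw [hTapp] at this
        rw [← this]
        abel
      simp only [heq]
      exact hx.add (ha.const_smul l)
    have hmemA : (a, x + l • a) ∈ A₀' := by
      have htend : Filter.Tendsto (fun n => p n) Filter.atTop (nhds (a, x + l • a)) := by
        have : (fun n => p n) = fun n => ((p n).1, (p n).2) := by
          funext n; exact rfl
        rw [this]
        exact ha.prodMk_nhds hp2
      exact part3.mem_of_tendsto htend (Filter.Eventually.of_forall fun n => hpA n)
    exact ⟨(a, x + l • a), hmemA, by rw [hTapp]; simp⟩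
  haveI : CompleteSpace M := hMclosed.completeSpace_coe
  -- M has trivial orthogonal complement
  have hMbot : Mᗮ = ⊥ := by
    rw [Submodule.eq_bot_iff]
    intro h hh
    -- (h, conj l • h) belongs to the adjoint of A₀'
    have hadj : ((h, (starRingEnd ℂ) l • h) : 𝔥 × 𝔥) ∈ adjRel A₀' := by
      rw [mem_adjRel]
      intro q hq
      have h0 : ⟪(q.2 - l • q.1 : 𝔥), h⟫ = 0 :=
        (Submodule.mem_orthogonal _ _).mp hh _ ⟨q, hq, rfl⟩
      have h1 : ⟪h, q.2 - l • q.1⟫ = 0 := by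
        rw [← inner_conj_symm, h0, map_zero]
      rw [inner_sub_right, inner_smul_right, sub_eq_zero] at h1
      show ⟪(starRingEnd ℂ) l • h, q.1⟫ = ⟪h, q.2⟫
      rw [inner_smul_left, Complex.conj_conj, h1]
    have hS0 : ((h, (starRingEnd ℂ) l • h) : 𝔥 × 𝔥) ∈ adjRel A :=
      adjRel_antitone part1 hadj
    set f : ↥(adjRel A) := ⟨((h, (starRingEnd ℂ) l • h) : 𝔥 × 𝔥), hS0⟩ with hfdef
    have hperp : (Γ₀ f : 𝓗₀) ∈ 𝓗₁ᗮ := by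
      rw [Submodule.mem_orthogonal]
      intro u hu
      obtain ⟨g, hg0, hg1⟩ := hsurj' 0 ⟨u, hu⟩
      have hgA : (g : 𝔥 × 𝔥) ∈ A₀' := hmem.mpr ⟨g, hg0, rfl⟩
      have hq : ⟪(f : 𝔥 × 𝔥).2, (g : 𝔥 × 𝔥).1⟫ = ⟪(f : 𝔥 × 𝔥).1, (g : 𝔥 × 𝔥).2⟫ := hadj _ hgA
      have hG := hGreen f g
      rw [hg0, hg1] at hG
      have hL : ⟪(g : 𝔥 × 𝔥).1, (f : 𝔥 × 𝔥).2⟫ - ⟪(g : 𝔥 × 𝔥).2, (f : 𝔥 × 𝔥).1⟫ = 0 := by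
        rw [sub_eq_zero]
        calc ⟪(g : 𝔥 × 𝔥).1, (f : 𝔥 × 𝔥).2⟫
            = (starRingEnd ℂ) ⟪(f : 𝔥 × 𝔥).2, (g : 𝔥 × 𝔥).1⟫ := (inner_conj_symm _ _).symm
          _ = (starRingEnd ℂ) ⟪(f : 𝔥 × 𝔥).1, (g : 𝔥 × 𝔥).2⟫ := by rw [hq]
          _ = ⟪(g : 𝔥 × 𝔥).2, (f : 𝔥 × 𝔥).1⟫ := inner_conj_symm _ _
      rw [hL] at hG
      simp only [map_zero, Submodule.coe_zero, inner_zero_left, zero_sub, mul_zero, sub_zero,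
        neg_eq_zero] at hG
      exact neg_eq_zero.mp hG.symm
    -- Green's identity applied to f itself
    have hGf := hGreen f f
    have hP2f : Submodule.orthogonalProjection (𝓗₁ᗮ) (Γ₀ f) = ⟨Γ₀ f, hperp⟩ := hP2self ⟨Γ₀ f, hperp⟩
    have hi1 : ⟪Γ₀ f, ((Γ₁ f : 𝓗₀))⟫ = 0 :=
      (Submodule.mem_orthogonal' _ _).mp hperp _ (Γ₁ f).2
    have hi2 : ⟪((Γ₁ f : 𝓗₀)), Γ₀ f⟫ = 0 :=
      (Submodule.mem_orthogonal _ _).mp hperp _ (Γ₁ f).2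
    rw [hP2f, hi1, hi2] at hGf
    have hLf : ⟪(f : 𝔥 × 𝔥).1, (f : 𝔥 × 𝔥).2⟫ - ⟪(f : 𝔥 × 𝔥).2, (f : 𝔥 × 𝔥).1⟫ =
        ((starRingEnd ℂ) l - l) * ((‖h‖ : ℂ)) ^ 2 := by
      show ⟪h, (starRingEnd ℂ) l • h⟫ - ⟪(starRingEnd ℂ) l • h, h⟫ = _
      rw [inner_smul_right, inner_smul_left, Complex.conj_conj,
        show ⟪h, h⟫ = ((‖h‖ : ℂ)) ^ 2 from inner_self_eq_norm_sq_to_K h]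
      ring
    rw [hLf] at hGf
    have hGfim := congrArg Complex.im hGf
    simp only [Submodule.coe_mk, sub_zero, zero_sub] at hGfim
    have hinner_self : ⟪(Γ₀ f : 𝓗₀), (Γ₀ f : 𝓗₀)⟫ = ((‖(Γ₀ f : 𝓗₀)‖ : ℂ)) ^ 2 := by
      exact_mod_cast inner_self_eq_norm_sq_to_K (Γ₀ f : 𝓗₀)
    rw [hinner_self] at hGfim
    have him1 : (((starRingEnd ℂ) l - l) * ((‖h‖ : ℂ)) ^ 2).im = -2 * l.im * ‖h‖ ^ 2 := by
      simp [Complex.sub_im, Complex.mul_im, ← Complex.ofReal_pow]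
      ring
    have him2 : (-(Complex.I * ((‖(Γ₀ f : 𝓗₀)‖ : ℂ)) ^ 2)).im = -(‖(Γ₀ f : 𝓗₀)‖ ^ 2) := by
      simp [Complex.mul_im, ← Complex.ofReal_pow]
    rw [him1, him2] at hGfim
    have hh2 : ‖h‖ ^ 2 ≤ 0 := by nlinarith [sq_nonneg ‖(Γ₀ f : 𝓗₀)‖]
    have : ‖h‖ = 0 := by nlinarith [sq_nonneg ‖h‖, norm_nonneg h]
    exact norm_eq_zero.mp this
  have hMtop : M = ⊤ := by
    calc M = Mᗮᗮ := (Submodule.orthogonal_orthogonal M).symm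
      _ = (⊥ : Submodule ℂ 𝔥)ᗮ := by rw [hMbot]
      _ = ⊤ := Submodule.bot_orthogonal_eq_top
  -- uniqueness of solutions
  have huniq : ∀ p q : 𝔥 × 𝔥, p ∈ A₀' → q ∈ A₀' → p.2 - l • p.1 = q.2 - l • q.1 → p = q := by
    intro p q hp hq he
    have hd : p - q ∈ A₀' := Submodule.sub_mem _ hp hq
    have hz : (p - q).2 - l • (p - q).1 = 0 := by
      simp only [Prod.snd_sub, Prod.fst_sub, smul_sub]
      rw [sub_sub_sub_comm] at *
      rw [he]
      abel
    have he2 := hest l hl _ hd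
    rw [hz, norm_zero] at he2
    have h1 : ‖(p - q).1‖ = 0 := by nlinarith [norm_nonneg (p - q).1, hlpos]
    have h1' : (p - q).1 = 0 := norm_eq_zero.mp h1
    have h2' : (p - q).2 = 0 := by
      have := hz
      rw [h1', smul_zero, sub_zero] at this
      exact this
    have : p - q = 0 := Prod.ext h1' h2'
    exact sub_eq_zero.mp this
  -- existence of solutions
  have hex : ∀ x : 𝔥, ∃ p : 𝔥 × 𝔥, p ∈ A₀' ∧ p.2 - l • p.1 = x := by
    intro x
    have hx : x ∈ M := hMtop ▸ Submodule.mem_top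
    obtain ⟨p, hp, hTp⟩ := Submodule.mem_map.mp hx
    exact ⟨p, hp, by rw [← hTapp p]; exact hTp⟩
  choose sol hsolA hsolT using hex
  have hadd : ∀ x y : 𝔥, sol (x + y) = sol x + sol y := by
    intro x y
    refine huniq _ _ (hsolA _) (Submodule.add_mem _ (hsolA x) (hsolA y)) ?_
    rw [hsolT]
    have hrhs : (sol x + sol y).2 - l • (sol x + sol y).1
        = ((sol x).2 - l • (sol x).1) + ((sol y).2 - l • (sol y).1) := by
      simp only [Prod.snd_add, Prod.fst_add, smul_add]
      abel
    rw [hrhs, hsolT, hsolT]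
  have hsmul : ∀ (c : ℂ) (x : 𝔥), sol (c • x) = c • sol x := by
    intro c x
    refine huniq _ _ (hsolA _) (Submodule.smul_mem _ c (hsolA x)) ?_
    rw [hsolT]
    have hrhs : (c • sol x).2 - l • (c • sol x).1 = c • ((sol x).2 - l • (sol x).1) := by
      simp only [Prod.smul_snd, Prod.smul_fst, smul_sub, smul_comm l c]
    rw [hrhs, hsolT]
  set Rlin : 𝔥 →ₗ[ℂ] 𝔥 :=
    { toFun := fun x => (sol x).1
      map_add' := fun x y => by
        show (sol (x + y)).1 = (sol x).1 + (sol y).1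
        rw [hadd]; rfl
      map_smul' := fun c x => by
        show (sol (c • x)).1 = c • (sol x).1
        rw [hsmul]; rfl } with hRlin
  have hbound : ∀ x : 𝔥, ‖Rlin x‖ ≤ (-l.im)⁻¹ * ‖x‖ := by
    intro x
    have he := hest l hl _ (hsolA x)
    rw [hsolT x] at he
    show ‖(sol x).1‖ ≤ (-l.im)⁻¹ * ‖x‖
    rw [inv_mul_eq_div, le_div_iff₀ hlpos]
    nlinarith [he]
  set R : 𝔥 →L[ℂ] 𝔥 := Rlin.mkContinuous ((-l.im)⁻¹) hbound with hR
  refine ⟨R, ?_, ?_⟩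
  · intro x
    have h2 : (sol x).2 = x + l • (sol x).1 := by
      have := hsolT x
      rw [sub_eq_iff_eq_add'] at this
      rw [this]
      abel
    have hRx : R x = (sol x).1 := rfl
    have : ((R x, x + l • R x) : 𝔥 × 𝔥) = sol x := by
      rw [hRx, ← h2]
    rw [this]
    exact hsolA x
  · intro p hp
    have := huniq (sol (p.2 - l • p.1)) p (hsolA _) hp (hsolT _)
    calc R (p.2 - l • p.1) = (sol (p.2 - l • p.1)).1 := rfl
      _ = p.1 := by rw [this]
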